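/- Let C be a compact convex subset of ℝ^d, h: ℝ^d → ℝ differentiable and μ-strongly convex (μ > 0), R ∈ ℝ^d, η > 0, and x ∈ C. Let x⁺ = argmax_{y ∈ C} {η⟨y, R⟩ - D_h(y, x)}. Then for every z ∈ C, η⟨R, z - x⟩ ≤ D_h(z, x) - D_h(z, x⁺) + (η²/(2μ))‖R‖². -/

import Mathlib

/-- First-order condition for convex differentiable functions. -/
lemma convex_grad_le {E : Type*} [NormedAddCommGroup E] [NormedSpace ℝ E]
    (g : E → ℝ) (hg : ConvexOn ℝ Set.univ g) (p q : E) (L : E →L[ℝ] ℝ)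
    (hL : HasFDerivAt g L q) : L (p - q) ≤ g p - g q := by
  have hline : HasDerivAt (fun t : ℝ => t • (p - q) + q) (p - q) 0 := by
    simpa using ((hasDerivAt_id (0 : ℝ)).smul_const (p - q)).add_const q
  have hL' : HasFDerivAt g L ((fun t : ℝ => t • (p - q) + q) 0) := by simpa using hL
  have hcomp : HasDerivAt (fun t : ℝ => g (t • (p - q) + q)) (L (p - q)) 0 :=
    hL'.comp_hasDerivAt 0 hline
  have hconv : ConvexOn ℝ Set.univ (fun t : ℝ => g (t • (p - q) + q)) := by
    have := hg.comp_affineMap (AffineMap.lineMap q p)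
    have e : (fun t : ℝ => g (t • (p - q) + q)) = g ∘ AffineMap.lineMap q p := by
      funext t; simp [AffineMap.lineMap_apply]
    rw [e]; simpa using this
  have := hconv.le_slope_of_hasDerivAt (Set.mem_univ (0 : ℝ)) (Set.mem_univ 1)
    one_pos hcomp
  simpa [slope_def_field, sub_add_cancel] using this

/-- Strong convexity lower bound: `D_h(p,q) ≥ (μ/2)‖p-q‖²`. -/
lemma strong_lb {E : Type*} [NormedAddCommGroup E] [InnerProductSpace ℝ E]
    [CompleteSpace E]
    (h : E → ℝ) (hdiff : Differentiable ℝ h) (μ : ℝ)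
    (hstrong : ConvexOn ℝ Set.univ (fun x => h x - (μ / 2) * ‖x‖ ^ 2)) (p q : E) :
    (μ / 2) * ‖p - q‖ ^ 2 ≤ h p - h q - (inner ℝ (gradient h q) (p - q) : ℝ) := by
  have hq : HasFDerivAt h (InnerProductSpace.toDual ℝ E (gradient h q)) q :=
    hasGradientAt_iff_hasFDerivAt.1 (hdiff q).hasGradientAt
  have hsq0 := (hasFDerivAt_id q).inner ℝ (hasFDerivAt_id q)
  have hsq : HasFDerivAt (fun y : E => ‖y‖ ^ 2)
      ((fderivInnerCLM ℝ (q, q)).comp ((ContinuousLinearMap.id ℝ E).prod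
        (ContinuousLinearMap.id ℝ E))) q := by
    simpa [real_inner_self_eq_norm_sq] using hsq0
  have hg : HasFDerivAt (fun y : E => h y - (μ / 2) * ‖y‖ ^ 2)
      (InnerProductSpace.toDual ℝ E (gradient h q) -
        (μ / 2) • ((fderivInnerCLM ℝ (q, q)).comp ((ContinuousLinearMap.id ℝ E).prod
          (ContinuousLinearMap.id ℝ E)))) q := hq.sub (hsq.const_mul (μ / 2))
  have key := convex_grad_le _ hstrong p q _ hg
  simp only [ContinuousLinearMap.sub_apply, ContinuousLinearMap.smul_apply,
    InnerProductSpace.toDual_apply_apply, ContinuousLinearMap.comp_apply,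
    ContinuousLinearMap.prod_apply, ContinuousLinearMap.id_apply,
    fderivInnerCLM_apply, smul_eq_mul] at key
  have hns : ‖p - q‖ ^ 2 = ‖p‖ ^ 2 - 2 * (inner ℝ p q : ℝ) + ‖q‖ ^ 2 := norm_sub_sq_real p q
  have h1 : (inner ℝ q (p - q) : ℝ) = inner ℝ q p - inner ℝ q q := inner_sub_right q p q
  have h2 : (inner ℝ (p - q) q : ℝ) = inner ℝ p q - inner ℝ q q := inner_sub_left p q q
  have h3 : (inner ℝ q q : ℝ) = ‖q‖ ^ 2 := real_inner_self_eq_norm_sq q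
  have h4 : (inner ℝ q p : ℝ) = inner ℝ p q := real_inner_comm p q
  rw [h1, h2, h3, h4] at key
  rw [hns]
  nlinarith [key]

/-- One-step mirror descent inequality: if `x⁺` maximizes
`η⟨y, R⟩ - D_h(y, x)` over a compact convex set `C` and `h` is `μ`-strongly
convex and differentiable, then for every `z ∈ C`,
`η⟨R, z - x⟩ ≤ D_h(z, x) - D_h(z, x⁺) + (η²/(2μ))‖R‖²`. -/
theorem mirror_descent_step
    {d : ℕ}
    (C : Set (EuclideanSpace ℝ (Fin d))) (hCcompact : IsCompact C) (hCconvex : Convex ℝ C)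
    (h : EuclideanSpace ℝ (Fin d) → ℝ) (hdiff : Differentiable ℝ h)
    (μ : ℝ) (hμ : 0 < μ)
    (hstrong : ConvexOn ℝ Set.univ (fun x => h x - (μ / 2) * ‖x‖ ^ 2))
    (D : EuclideanSpace ℝ (Fin d) → EuclideanSpace ℝ (Fin d) → ℝ)
    (hD : ∀ p q, D p q = h p - h q - (inner ℝ (gradient h q) (p - q) : ℝ))
    (R : EuclideanSpace ℝ (Fin d)) (η : ℝ) (hη : 0 < η)
    (x : EuclideanSpace ℝ (Fin d)) (hx : x ∈ C)
    (xplus : EuclideanSpace ℝ (Fin d)) (hxplus : xplus ∈ C)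
    (hargmax : ∀ y ∈ C,
      η * (inner ℝ y R : ℝ) - D y x ≤ η * (inner ℝ xplus R : ℝ) - D xplus x) :
    ∀ z ∈ C,
      η * (inner ℝ R (z - x) : ℝ) ≤ D z x - D z xplus + (η ^ 2 / (2 * μ)) * ‖R‖ ^ 2 := by
  intro z hz
  -- the function being maximized, with D unfolded
  set F : EuclideanSpace ℝ (Fin d) → ℝ := fun y =>
    η * (inner ℝ y R : ℝ) - (h y - h x - (inner ℝ (gradient h x) (y - x) : ℝ)) with hF
  have hmax : IsMaxOn F C xplus := by
    intro y hy
    have := hargmax y hy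
    rw [hD y x, hD xplus x] at this
    simpa [hF] using this
  -- derivative of F at xplus
  have t1 : HasFDerivAt (fun y : EuclideanSpace ℝ (Fin d) => (inner ℝ y R : ℝ))
      ((fderivInnerCLM ℝ (xplus, R)).comp
        ((ContinuousLinearMap.id ℝ _).prod 0)) xplus :=
    (hasFDerivAt_id xplus).inner ℝ (hasFDerivAt_const R xplus)
  have t2 : HasFDerivAt h
      (InnerProductSpace.toDual ℝ _ (gradient h xplus)) xplus :=
    hasGradientAt_iff_hasFDerivAt.1 (hdiff xplus).hasGradientAt
  have t3 : HasFDerivAt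
      (fun y : EuclideanSpace ℝ (Fin d) => (inner ℝ (gradient h x) (y - x) : ℝ))
      ((fderivInnerCLM ℝ (gradient h x, xplus - x)).comp
        ((0 : EuclideanSpace ℝ (Fin d) →L[ℝ] EuclideanSpace ℝ (Fin d)).prod
          (ContinuousLinearMap.id ℝ _))) xplus :=
    (hasFDerivAt_const (gradient h x) xplus).inner ℝ ((hasFDerivAt_id xplus).sub_const x)
  have HF : HasFDerivAt F
      (η • ((fderivInnerCLM ℝ (xplus, R)).comp
        ((ContinuousLinearMap.id ℝ _).prod 0)) -
       ((InnerProductSpace.toDual ℝ _ (gradient h xplus)) -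
        (fderivInnerCLM ℝ (gradient h x, xplus - x)).comp
          ((0 : EuclideanSpace ℝ (Fin d) →L[ℝ] EuclideanSpace ℝ (Fin d)).prod
            (ContinuousLinearMap.id ℝ _)))) xplus :=
    (t1.const_mul η).sub ((t2.sub_const (h x)).sub t3)
  have htangent : z - xplus ∈ posTangentConeAt C xplus :=
    sub_mem_posTangentConeAt_of_segment_subset (hCconvex.segment_subset hxplus hz)
  have key1 := hmax.localize.hasFDerivWithinAt_nonpos HF.hasFDerivWithinAt htangent
  simp only [ContinuousLinearMap.sub_apply, ContinuousLinearMap.smul_apply,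
    ContinuousLinearMap.comp_apply, ContinuousLinearMap.prod_apply,
    ContinuousLinearMap.id_apply, ContinuousLinearMap.zero_apply,
    fderivInnerCLM_apply, InnerProductSpace.toDual_apply_apply, smul_eq_mul,
    inner_zero_right, inner_zero_left, add_zero, zero_add] at key1
  -- key1 : η * ⟪z - xplus, R⟫ - (⟪∇h xplus, z-xplus⟫ - ⟪∇h x, z-xplus⟫) ≤ 0
  have hcomm : (inner ℝ (z - xplus) R : ℝ) = inner ℝ R (z - xplus) := real_inner_comm _ _
  have hsum : (inner ℝ R (z - x) : ℝ) = inner ℝ R (z - xplus) + inner ℝ R (xplus - x) := by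
    rw [← inner_add_right, sub_add_sub_cancel]
  have hthree : D z x - D z xplus =
      ((inner ℝ (gradient h xplus) (z - xplus) : ℝ) -
        (inner ℝ (gradient h x) (z - xplus) : ℝ)) + D xplus x := by
    rw [hD z x, hD z xplus, hD xplus x]
    have e1 : (inner ℝ (gradient h x) (z - x) : ℝ) =
        inner ℝ (gradient h x) (z - xplus) + inner ℝ (gradient h x) (xplus - x) := by
      rw [← inner_add_right, sub_add_sub_cancel]
    rw [e1]; ring
  have hstrongb : μ / 2 * ‖xplus - x‖ ^ 2 ≤ D xplus x := by
    rw [hD xplus x]; exact strong_lb h hdiff μ hstrong xplus x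
  have young : η * (inner ℝ R (xplus - x) : ℝ) ≤
      η ^ 2 / (2 * μ) * ‖R‖ ^ 2 + μ / 2 * ‖xplus - x‖ ^ 2 := by
    have h1 : (inner ℝ R (xplus - x) : ℝ) ≤ ‖R‖ * ‖xplus - x‖ := real_inner_le_norm _ _
    have h2 : η * (inner ℝ R (xplus - x) : ℝ) ≤ η * (‖R‖ * ‖xplus - x‖) := by nlinarith
    have h3 : 2 * μ * (η * (‖R‖ * ‖xplus - x‖)) ≤
        2 * μ * (η ^ 2 / (2 * μ) * ‖R‖ ^ 2 + μ / 2 * ‖xplus - x‖ ^ 2) := by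
      have expand : 2 * μ * (η ^ 2 / (2 * μ) * ‖R‖ ^ 2 + μ / 2 * ‖xplus - x‖ ^ 2) =
          η ^ 2 * ‖R‖ ^ 2 + μ ^ 2 * ‖xplus - x‖ ^ 2 := by
        field_simp
      rw [expand]
      nlinarith [sq_nonneg (η * ‖R‖ - μ * ‖xplus - x‖)]
    have h4 := le_of_mul_le_mul_left h3 (by positivity : (0:ℝ) < 2 * μ)
    linarith
  rw [hsum]
  rw [hcomm] at key1
  linarith
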